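/- Let T be an mk×mk complex matrix written as an m×m block matrix with k×k blocks, such that each nonzero block is unitary and each block row and each block column contains at most one nonzero block. Then T is a partial isometry, and σ(T) ⊆ {0} ∪ 𝕋. -/
import Mathlib


open Matrix

/-- The `(i, j)` block (a `k × k` matrix) of an `m × m` block matrix with
`k × k` blocks. -/
def blk {m k : ℕ} (T : Matrix (Fin m × Fin k) (Fin m × Fin k) ℂ) (i j : Fin m) :
    Matrix (Fin k) (Fin k) ℂ :=
  Matrix.of fun a b => T (i, a) (j, b)

/-- `T` is an `m × m` block matrix with `k × k` blocks in which every nonzero block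
is unitary and every block row and every block column contains at most one
nonzero block. -/
def GoodBlockForm {m k : ℕ} (T : Matrix (Fin m × Fin k) (Fin m × Fin k) ℂ) : Prop :=
  (∀ i j, blk T i j = 0 ∨ ((blk T i j)ᴴ * blk T i j = 1 ∧ blk T i j * (blk T i j)ᴴ = 1)) ∧
  (∀ i j j', blk T i j ≠ 0 → blk T i j' ≠ 0 → j = j') ∧
  (∀ i i' j, blk T i j ≠ 0 → blk T i' j ≠ 0 → i = i')

/-- `T` is a partial isometry: both `Tᴴ * T` and `T * Tᴴ` are orthogonal
projections. -/
def IsPartialIsometry {N : Type*} [Fintype N] [DecidableEq N]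
    (T : Matrix N N ℂ) : Prop :=
  (Tᴴ * T) * (Tᴴ * T) = Tᴴ * T ∧ (Tᴴ * T)ᴴ = Tᴴ * T ∧
  (T * Tᴴ) * (T * Tᴴ) = T * Tᴴ ∧ (T * Tᴴ)ᴴ = T * Tᴴ

variable {m k : ℕ}

lemma blk_conjTranspose (T : Matrix (Fin m × Fin k) (Fin m × Fin k) ℂ) (i j : Fin m) :
    blk Tᴴ i j = (blk T j i)ᴴ := by
  ext a b; rfl

lemma blk_mul (A B : Matrix (Fin m × Fin k) (Fin m × Fin k) ℂ) (i j : Fin m) :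
    blk (A * B) i j = ∑ l, blk A i l * blk B l j := by
  ext a b
  simp only [blk, Matrix.of_apply, Matrix.mul_apply, Matrix.sum_apply]
  exact Fintype.sum_prod_type _

lemma good_conjTranspose {A : Matrix (Fin m × Fin k) (Fin m × Fin k) ℂ}
    (hA : GoodBlockForm A) : GoodBlockForm Aᴴ := by
  obtain ⟨hu, hr, hc⟩ := hA
  refine ⟨fun i j => ?_, fun i j j' h h' => ?_, fun i i' j h h' => ?_⟩
  · rcases hu j i with h | ⟨h1, h2⟩
    · left; rw [blk_conjTranspose, h]; simp
    · right
      rw [blk_conjTranspose]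
      constructor
      · simpa using h2
      · simpa using h1
  · refine hc j j' i ?_ ?_ <;> rw [blk_conjTranspose] at h h' <;>
      [skip; skip] <;> simp_all [conjTranspose_eq_zero]
  · refine hr j i i' ?_ ?_ <;> rw [blk_conjTranspose] at h h' <;> simp_all [conjTranspose_eq_zero]

lemma good_mul {A B : Matrix (Fin m × Fin k) (Fin m × Fin k) ℂ}
    (hA : GoodBlockForm A) (hB : GoodBlockForm B) : GoodBlockForm (A * B) := by
  obtain ⟨hAu, hAr, hAc⟩ := hA
  obtain ⟨hBu, hBr, hBc⟩ := hB
  have key : ∀ i j, blk (A * B) i j ≠ 0 →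
      ∃ l, blk A i l ≠ 0 ∧ blk B l j ≠ 0 ∧ blk (A * B) i j = blk A i l * blk B l j := by
    intro i j h
    rw [blk_mul] at h
    obtain ⟨l, -, hl⟩ := Finset.exists_ne_zero_of_sum_ne_zero h
    have hAl : blk A i l ≠ 0 := fun h0 => hl (by rw [h0, zero_mul])
    have hBl : blk B l j ≠ 0 := fun h0 => hl (by rw [h0, mul_zero])
    refine ⟨l, hAl, hBl, ?_⟩
    rw [blk_mul]
    refine Finset.sum_eq_single l (fun l' _ hne => ?_) (by simp)
    by_cases h0 : blk A i l' = 0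
    · rw [h0, zero_mul]
    · exact absurd (hAr i l' l h0 hAl) hne
  refine ⟨fun i j => ?_, fun i j j' h h' => ?_, fun i i' j h h' => ?_⟩
  · by_cases h : blk (A * B) i j = 0
    · exact Or.inl h
    · obtain ⟨l, hAl, hBl, heq⟩ := key i j h
      obtain ⟨hA1, hA2⟩ := (hAu i l).resolve_left hAl
      obtain ⟨hB1, hB2⟩ := (hBu l j).resolve_left hBl
      right
      rw [heq, conjTranspose_mul]
      constructor
      · calc (blk B l j)ᴴ * (blk A i l)ᴴ * (blk A i l * blk B l j)
            = (blk B l j)ᴴ * ((blk A i l)ᴴ * blk A i l) * blk B l j := by simp only [mul_assoc]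
          _ = 1 := by rw [hA1, mul_one, hB1]
      · calc blk A i l * blk B l j * ((blk B l j)ᴴ * (blk A i l)ᴴ)
            = blk A i l * (blk B l j * (blk B l j)ᴴ) * (blk A i l)ᴴ := by simp only [mul_assoc]
          _ = 1 := by rw [hB2, mul_one, hA2]
  · obtain ⟨l, hAl, hBl, -⟩ := key i j h
    obtain ⟨l', hAl', hBl', -⟩ := key i j' h'
    have := hAr i l l' hAl hAl'
    subst this
    exact hBr l j j' hBl hBl'
  · obtain ⟨l, hAl, hBl, -⟩ := key i j h
    obtain ⟨l', hAl', hBl', -⟩ := key i' j h'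
    have := hBc l l' j hBl hBl'
    subst this
    exact hAc i i' l hAl hAl'

open Classical in
lemma gram {A : Matrix (Fin m × Fin k) (Fin m × Fin k) ℂ} (hA : GoodBlockForm A) :
    Aᴴ * A = Matrix.diagonal (fun p : Fin m × Fin k =>
      if ∀ i, blk A i p.1 = 0 then (0 : ℂ) else 1) := by
  obtain ⟨hu, hr, hc⟩ := hA
  ext ⟨j, a⟩ ⟨j', b⟩
  have hsum : (Aᴴ * A) (j, a) (j', b) = ∑ i, ((blk A i j)ᴴ * blk A i j') a b := by
    rw [Matrix.mul_apply]
    rw [Fintype.sum_prod_type]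
    refine Finset.sum_congr rfl fun i _ => ?_
    rw [Matrix.mul_apply]
    rfl
  rw [hsum]
  by_cases hjj : j = j'
  · subst hjj
    by_cases hall : ∀ i, blk A i j = 0
    · have h1 : ∀ i ∈ Finset.univ, ((blk A i j)ᴴ * blk A i j) a b = (0 : ℂ) := by
        intro i _
        rw [hall i]
        simp
      rw [Finset.sum_congr rfl h1, Matrix.diagonal_apply]
      simp [hall]
    · push_neg at hall
      obtain ⟨i₀, hi₀⟩ := hall
      rw [Finset.sum_eq_single i₀ (fun i _ hne => ?_) (by simp)]
      · rw [((hu i₀ j).resolve_left hi₀).1, Matrix.diagonal_apply]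
        have hne0 : ¬ (∀ i, blk A i j = 0) := fun h => hi₀ (h i₀)
        simp only [hne0, if_false]
        by_cases hab : a = b
        · subst hab; simp [Matrix.one_apply]
        · simp [Matrix.one_apply, hab, Prod.ext_iff]
      · have : blk A i j = 0 := by
          by_contra h0
          exact hne (hc i i₀ j h0 hi₀)
        rw [this]
        simp
  · have hz : ∀ i ∈ Finset.univ, ((blk A i j)ᴴ * blk A i j') a b = (0 : ℂ) := by
      intro i _
      by_cases h0 : blk A i j = 0
      · rw [h0]; simp
      · have h0' : blk A i j' = 0 := by
          by_contra h1
          exact hjj (hr i j j' h0 h1)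
        rw [h0']; simp
    rw [Finset.sum_congr rfl hz, Matrix.diagonal_apply_ne]
    · simp
    · simp [Prod.ext_iff, hjj]

lemma diag_proj {N : Type*} [Fintype N] [DecidableEq N] (d : N → ℂ)
    (hd01 : ∀ p, d p = 0 ∨ d p = 1) :
    Matrix.diagonal d * Matrix.diagonal d = Matrix.diagonal d ∧
    (Matrix.diagonal d)ᴴ = Matrix.diagonal d := by
  have hd : (fun i => d i * d i) = d := by
    funext p
    rcases hd01 p with h | h <;> rw [h] <;> ring
  have hs : star d = d := by
    funext p
    rcases hd01 p with h | h <;> simp [Pi.star_apply, h]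
  exact ⟨by rw [Matrix.diagonal_mul_diagonal]; exact congrArg _ hd,
    by rw [Matrix.diagonal_conjTranspose]; exact congrArg _ hs⟩

lemma good_isPI {T : Matrix (Fin m × Fin k) (Fin m × Fin k) ℂ} (hT : GoodBlockForm T) :
    (Tᴴ * T) * (Tᴴ * T) = Tᴴ * T ∧ (Tᴴ * T)ᴴ = Tᴴ * T ∧
    (T * Tᴴ) * (T * Tᴴ) = T * Tᴴ ∧ (T * Tᴴ)ᴴ = T * Tᴴ := by
  have h1 := gram hT
  have h2 := gram (good_conjTranspose hT)
  rw [conjTranspose_conjTranspose] at h2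
  have p1 := diag_proj
    (fun p : Fin m × Fin k => if ∀ i, blk T i p.1 = 0 then (0:ℂ) else 1)
    (fun p => by by_cases h : ∀ i, blk T i p.1 = 0 <;> simp [h])
  have p2 := diag_proj
    (fun p : Fin m × Fin k => if ∀ i, blk Tᴴ i p.1 = 0 then (0:ℂ) else 1)
    (fun p => by by_cases h : ∀ i, blk Tᴴ i p.1 = 0 <;> simp [h])
  exact ⟨by rw [h1]; exact p1.1, by rw [h1]; exact p1.2,
    by rw [h2]; exact p2.1, by rw [h2]; exact p2.2⟩

lemma good_pow {T : Matrix (Fin m × Fin k) (Fin m × Fin k) ℂ} (hT : GoodBlockForm T) :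
    ∀ n : ℕ, GoodBlockForm (T ^ (n + 1)) := by
  intro n
  induction n with
  | zero => simpa using hT
  | succ n ih => rw [pow_succ]; exact good_mul ih hT

lemma good_spec {T : Matrix (Fin m × Fin k) (Fin m × Fin k) ℂ} (hT : GoodBlockForm T) :
    spectrum ℂ T ⊆ {0} ∪ {z : ℂ | ‖z‖ = 1} := by
  intro μ hμ
  by_cases h0 : μ = 0
  · exact Or.inl h0
  right
  rw [spectrum.mem_iff] at hμ
  have hdet : (algebraMap ℂ (Matrix (Fin m × Fin k) (Fin m × Fin k) ℂ) μ - T).det = 0 := by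
    by_contra hd
    exact hμ ((Matrix.isUnit_iff_isUnit_det _).2 (isUnit_iff_ne_zero.2 hd))
  obtain ⟨v, hv0, hv⟩ := (Matrix.exists_mulVec_eq_zero_iff).2 hdet
  have hTv : T *ᵥ v = μ • v := by
    rw [Matrix.sub_mulVec] at hv
    have h1 : (algebraMap ℂ (Matrix (Fin m × Fin k) (Fin m × Fin k) ℂ) μ) *ᵥ v = μ • v := by
      rw [Algebra.algebraMap_eq_smul_one, Matrix.smul_mulVec, Matrix.one_mulVec]
    rw [h1] at hv
    exact (sub_eq_zero.mp hv).symm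
  have hTn : ∀ n : ℕ, (T ^ (n + 1)) *ᵥ v = μ ^ (n + 1) • v := by
    intro n
    induction n with
    | zero => simpa using hTv
    | succ n ih =>
      rw [pow_succ', ← Matrix.mulVec_mulVec, ih, Matrix.mulVec_smul, hTv, smul_smul,
        ← pow_succ]
  have hS : star v ⬝ᵥ v ≠ 0 := by
    open ComplexOrder in
    exact fun h => hv0 (dotProduct_star_self_eq_zero.mp h)
  have key : ∀ n : ℕ, (star μ * μ) ^ (n + 1) * (star v ⬝ᵥ v)
      = star v ⬝ᵥ ((Matrix.diagonal fun p : Fin m × Fin k =>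
          if ∀ i, blk (T ^ (n + 1)) i p.1 = 0 then (0:ℂ) else 1) *ᵥ v) := by
    intro n
    have hg := gram (good_pow hT n)
    calc (star μ * μ) ^ (n + 1) * (star v ⬝ᵥ v)
        = star (μ ^ (n + 1) • v) ⬝ᵥ (μ ^ (n + 1) • v) := by
          rw [star_smul, smul_dotProduct, dotProduct_smul, smul_eq_mul,
            smul_eq_mul, mul_pow, star_pow]
          ring
      _ = star ((T ^ (n + 1)) *ᵥ v) ⬝ᵥ ((T ^ (n + 1)) *ᵥ v) := by rw [hTn n]
      _ = star v ⬝ᵥ (((T ^ (n + 1))ᴴ * (T ^ (n + 1))) *ᵥ v) := by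
          rw [Matrix.star_mulVec, Matrix.dotProduct_mulVec, Matrix.dotProduct_mulVec,
            Matrix.vecMul_vecMul]
      _ = _ := by rw [hg]
  have hpig : ∃ n n', n < n' ∧
      (fun j : Fin m => if ∀ i, blk (T ^ (n + 1)) i j = 0 then true else false)
      = (fun j : Fin m => if ∀ i, blk (T ^ (n' + 1)) i j = 0 then true else false) := by
    obtain ⟨a, b, hab, hfab⟩ := Finite.exists_ne_map_eq_of_infinite
      (fun n : ℕ => fun j : Fin m => if ∀ i, blk (T ^ (n + 1)) i j = 0 then true else false)
    rcases hab.lt_or_gt with h | h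
    · exact ⟨a, b, h, hfab⟩
    · exact ⟨b, a, h, hfab.symm⟩
  obtain ⟨n, n', hnn, hχ⟩ := hpig
  have hdg : (fun p : Fin m × Fin k => if ∀ i, blk (T ^ (n + 1)) i p.1 = 0 then (0:ℂ) else 1)
      = (fun p : Fin m × Fin k =>
          if ∀ i, blk (T ^ (n' + 1)) i p.1 = 0 then (0:ℂ) else 1) := by
    funext p
    have h := congrFun hχ p.1
    by_cases hP : ∀ i, blk (T ^ (n + 1)) i p.1 = 0 <;>
      by_cases hQ : ∀ i, blk (T ^ (n' + 1)) i p.1 = 0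
    · simp [hP, hQ]
    · simp [hP, hQ] at h
    · simp [hP, hQ] at h
    · simp [hP, hQ]
  have heq : (star μ * μ) ^ (n + 1) * (star v ⬝ᵥ v)
      = (star μ * μ) ^ (n' + 1) * (star v ⬝ᵥ v) := by
    rw [key n, key n', hdg]
  have hr0 : star μ * μ ≠ 0 := mul_ne_zero (star_ne_zero.2 h0) h0
  have hcan : (star μ * μ) ^ (n + 1) = (star μ * μ) ^ (n' + 1) :=
    mul_right_cancel₀ hS heq
  have hd : n' + 1 = (n + 1) + (n' - n) := by omega
  have h1 : (star μ * μ) ^ (n' - n) = 1 := by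
    have h2 : (star μ * μ) ^ (n + 1) * (star μ * μ) ^ (n' - n)
        = (star μ * μ) ^ (n + 1) * 1 := by
      rw [← pow_add, ← hd, mul_one]
      exact hcan.symm
    exact mul_left_cancel₀ (pow_ne_zero _ hr0) h2
  have hnorm : (‖μ‖ * ‖μ‖) ^ (n' - n) = 1 := by
    have := congrArg norm h1
    rwa [norm_pow, norm_mul, norm_star, norm_one] at this
  have hd0 : n' - n ≠ 0 := by omega
  have hsq : ‖μ‖ * ‖μ‖ = 1 := by
    by_contra hne
    rcases lt_or_gt_of_ne hne with h | h
    · have := pow_lt_one₀ (mul_nonneg (norm_nonneg _) (norm_nonneg _)) h hd0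
      rw [hnorm] at this
      exact lt_irrefl _ this
    · have := one_lt_pow₀ h hd0
      rw [hnorm] at this
      exact lt_irrefl _ this
  show ‖μ‖ = 1
  nlinarith [norm_nonneg μ]


/-- A matrix of the above block form is a partial isometry and its spectrum is
contained in `{0} ∪ 𝕋`. -/
theorem stmt5 {m k : ℕ} (T : Matrix (Fin m × Fin k) (Fin m × Fin k) ℂ)
    (hT : GoodBlockForm T) :
    IsPartialIsometry T ∧ spectrum ℂ T ⊆ {0} ∪ {z : ℂ | ‖z‖ = 1} := by
  exact ⟨good_isPI hT, good_spec hT⟩
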